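/- If p and q are coprime integers with 0 < q < p, then for every integer k one has |p, −q − k·p| = |p,q| + |k+1|. -/
import Mathlib


/-- The complexity `|p,q|` of a coprime pair of integers, defined recursively by
`|±1,0| = |0,±1| = |1,1| = 0`, `|p,q| = 1 + |p,q-p|` if `q > p > 0`,
`|p,q| = 1 + |p-q,q|` if `p > q > 0`, `|p,q| = |p,-q| + 1` if `p > 0 > q`, and
`|p,q| = |-p,-q|` if `p < 0` and `q ≠ 0`. -/
def pqComplexity (p q : ℤ) : ℕ :=
  if h1 : p < 0 then
    if q = 0 then 0 else pqComplexity (-p) (-q)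
  else if h2 : p = 0 then 0
  else
    if h3 : q < 0 then pqComplexity p (-q) + 1
    else if h4 : q = 0 then 0
    else
      if h5 : p < q then 1 + pqComplexity p (q - p)
      else if h6 : q < p then 1 + pqComplexity (p - q) q
      else 0
termination_by 3 * (p.natAbs + q.natAbs) + (if p < 0 then 2 else if q < 0 then 1 else 0)
decreasing_by
  all_goals (split_ifs <;> omega)

lemma pq_lt (p q : ℤ) (hp : 0 < p) (h : p < q) :
    pqComplexity p q = 1 + pqComplexity p (q - p) := by
  rw [pqComplexity]; split_ifs <;> first | rfl | omega

lemma pq_gt (p q : ℤ) (hq : 0 < q) (h : q < p) :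
    pqComplexity p q = 1 + pqComplexity (p - q) q := by
  rw [pqComplexity]; split_ifs <;> first | rfl | omega

lemma pq_neg (p q : ℤ) (hp : 0 < p) (hq : 0 < q) :
    pqComplexity p (-q) = pqComplexity p q + 1 := by
  rw [pqComplexity]; split_ifs <;> first | omega | rw [neg_neg]

lemma pq_eq (p : ℤ) (hp : 0 < p) : pqComplexity p p = 0 := by
  rw [pqComplexity]; split_ifs <;> first | rfl | omega

lemma pq_symm_aux : ∀ (n : ℕ) (a b : ℤ), a.natAbs + b.natAbs ≤ n → 0 < a → 0 < b →
    pqComplexity a b = pqComplexity b a := by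
  intro n
  induction n with
  | zero => intro a b hn ha hb; omega
  | succ n ih =>
    intro a b hn ha hb
    rcases lt_trichotomy a b with hlt | heq | hgt
    · rw [pq_lt a b ha hlt, pq_gt b a ha hlt]
      rw [ih a (b - a) (by omega) ha (by omega)]
    · rw [heq]
    · rw [pq_gt a b hb hgt, pq_lt b a hb hgt]
      rw [ih (a - b) b (by omega) (by omega) hb]

lemma pq_symm (a b : ℤ) (ha : 0 < a) (hb : 0 < b) :
    pqComplexity a b = pqComplexity b a :=
  pq_symm_aux (a.natAbs + b.natAbs) a b le_rfl ha hb

lemma pq_add_mul (p q : ℤ) (hp : 0 < p) (hq : 0 < q) (n : ℕ) :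
    pqComplexity p (q + n * p) = n + pqComplexity p q := by
  induction n with
  | zero => simp
  | succ n ih =>
    have h : q + ((n : ℤ) + 1) * p = (q + n * p) + p := by ring
    push_cast
    rw [h, pq_lt p (q + n * p + p) hp (by nlinarith [mul_nonneg (Int.natCast_nonneg n) hp.le]), add_sub_cancel_right, ih]
    push_cast; ring

theorem pqComplexity_neg_sub_mul (p q : ℤ) (hq : 0 < q) (hqp : q < p) (h : Int.gcd p q = 1)
    (k : ℤ) : pqComplexity p (-q - k * p) = pqComplexity p q + (k + 1).natAbs := by
  have hp : 0 < p := by omega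
  rcases le_or_gt 0 k with hk | hk
  · -- k ≥ 0 : -q - k*p = -(q + k*p)
    obtain ⟨n, rfl⟩ := Int.eq_ofNat_of_zero_le hk
    have h1 : -q - (n : ℤ) * p = -(q + n * p) := by ring
    rw [h1, pq_neg p _ hp (by positivity), pq_add_mul p q hp hq n]
    have : ((n : ℤ) + 1).natAbs = n + 1 := by omega
    rw [this]; omega
  · -- k ≤ -1 : -q - k*p = (p - q) + (-k-1)*p ≥ p - q > 0
    obtain ⟨n, hn⟩ : ∃ n : ℕ, -k - 1 = (n : ℤ) := ⟨(-k-1).toNat, by omega⟩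
    have h1 : -q - k * p = (p - q) + n * p := by rw [show (n:ℤ) = -k-1 from hn.symm]; ring
    rw [h1, pq_add_mul p (p - q) hp (by omega) n]
    have h2 : pqComplexity p (p - q) = pqComplexity p q := by
      rw [pq_gt p (p - q) (by omega) (by omega), pq_gt p q hq hqp,
        show p - (p - q) = q from by ring, pq_symm q (p - q) hq (by omega)]
    rw [h2]
    have : (k + 1).natAbs = n := by omega
    omega
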